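/- For fixed z ∈ ℂ, define the operator T_z on smooth functions f : ℝ → ℂ by (T_z f)(x) = z x f(x) − conj(z) f'(x). Let 𝟙 denote the constant function equal to 1. Then for every n ∈ ℕ and every x ∈ ℝ, (1/n!) (T_zⁿ 𝟙)(x) = ∑_{k=0}^{⌊n/2⌋} (−1)^k |z|^{2k} (x z)^{n−2k} / (2^k (n−2k)! k!), where T_zⁿ denotes the n-fold iterate of T_z. -/

import Mathlib

open ComplexConjugate

/-- The operator `T_z f = z x f(x) − conj z f'(x)`. -/
noncomputable def Tz (z : ℂ) (f : ℝ → ℂ) : ℝ → ℂ :=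
  fun x => z * (x : ℂ) * f x - conj z * deriv f x

/-- The coefficient `(-1)^k ‖z‖^(2k) n! / (2^k (n-2k)! k!)`. -/
noncomputable def czCoeff (z : ℂ) (n k : ℕ) : ℂ :=
  (-1)^k * (‖z‖:ℂ)^(2*k) * (n.factorial : ℂ) /
    ((2:ℂ)^k * ((n-2*k).factorial : ℂ) * (k.factorial : ℂ))

/-- The candidate for the `n`-th iterate of `Tz z` on `1`. -/
noncomputable def Fz (z : ℂ) (n : ℕ) : ℝ → ℂ :=
  fun x => ∑ k ∈ Finset.range (n/2+1), czCoeff z n k * ((x:ℂ)*z)^(n-2*k)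

lemma czCoeff_zero (z : ℂ) (n : ℕ) : czCoeff z n 0 = 1 := by
  have h : ((n.factorial : ℂ)) ≠ 0 := by
    exact_mod_cast Nat.cast_ne_zero.mpr (Nat.factorial_ne_zero n)
  simp [czCoeff, h]

lemma fact_cast_ne (n : ℕ) : ((n.factorial : ℂ)) ≠ 0 :=
  Nat.cast_ne_zero.mpr (Nat.factorial_ne_zero n)

lemma czCoeff_succ (z : ℂ) (n k : ℕ) (hk : 2*(k+1) ≤ n) :
    czCoeff z (n+1) (k+1) =
      czCoeff z n (k+1) - czCoeff z n k * ((n - 2*k : ℕ):ℂ) * ((‖z‖:ℂ)^2) := by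
  obtain ⟨p, rfl⟩ : ∃ p, n = 2*k+2+p := ⟨n - (2*k+2), by omega⟩
  have h1 : 2*k+2+p - 2*k = p+2 := by omega
  have h2 : 2*k+2+p - 2*(k+1) = p := by omega
  have h3 : 2*k+2+p+1 - 2*(k+1) = p+1 := by omega
  simp only [czCoeff, h1, h2, h3]
  have hden1 : ((2:ℂ)^(k+1) * (((p+1).factorial:ℕ):ℂ) * (((k+1).factorial:ℕ):ℂ)) ≠ 0 :=
    mul_ne_zero (mul_ne_zero (pow_ne_zero _ two_ne_zero) (fact_cast_ne _)) (fact_cast_ne _)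
  have hden2 : ((2:ℂ)^(k+1) * ((p.factorial:ℕ):ℂ) * (((k+1).factorial:ℕ):ℂ)) ≠ 0 :=
    mul_ne_zero (mul_ne_zero (pow_ne_zero _ two_ne_zero) (fact_cast_ne _)) (fact_cast_ne _)
  have hden3 : ((2:ℂ)^k * (((p+2).factorial:ℕ):ℂ) * ((k.factorial:ℕ):ℂ)) ≠ 0 :=
    mul_ne_zero (mul_ne_zero (pow_ne_zero _ two_ne_zero) (fact_cast_ne _)) (fact_cast_ne _)
  rw [div_mul_eq_mul_div, div_mul_eq_mul_div, div_sub_div _ _ hden2 hden3,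
      div_eq_div_iff hden1 (mul_ne_zero hden2 hden3)]
  have E1 : (((2*k+2+p+1).factorial : ℕ):ℂ)
      = (2*(k:ℂ)+2+(p:ℂ)+1) * (((2*k+2+p).factorial:ℕ):ℂ) := by
    rw [Nat.factorial_succ]; push_cast; ring
  have E2 : (((p+2).factorial : ℕ):ℂ) = ((p:ℂ)+2) * (((p:ℂ)+1) * ((p.factorial:ℕ):ℂ)) := by
    rw [Nat.factorial_succ, Nat.factorial_succ]; push_cast; ring
  have E3 : (((p+1).factorial : ℕ):ℂ) = ((p:ℂ)+1) * ((p.factorial:ℕ):ℂ) := by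
    rw [Nat.factorial_succ]; push_cast; ring
  have E4 : (((k+1).factorial : ℕ):ℂ) = ((k:ℂ)+1) * ((k.factorial:ℕ):ℂ) := by
    rw [Nat.factorial_succ]; push_cast; ring
  rw [E1, E2, E3, E4]
  push_cast
  ring

lemma czCoeff_top (z : ℂ) (m : ℕ) :
    czCoeff z (2*m+2) (m+1) = -(czCoeff z (2*m+1) m * ((‖z‖:ℂ)^2)) := by
  have h1 : 2*m+2 - 2*(m+1) = 0 := by omega
  have h2 : 2*m+1 - 2*m = 1 := by omega
  simp only [czCoeff, h1, h2, Nat.factorial_zero, Nat.factorial_one, Nat.cast_one, mul_one]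
  have hden1 : ((2:ℂ)^(m+1) * (((m+1).factorial:ℕ):ℂ)) ≠ 0 :=
    mul_ne_zero (pow_ne_zero _ two_ne_zero) (fact_cast_ne _)
  have hden2 : ((2:ℂ)^m * ((m.factorial:ℕ):ℂ)) ≠ 0 :=
    mul_ne_zero (pow_ne_zero _ two_ne_zero) (fact_cast_ne _)
  rw [div_mul_eq_mul_div, ← neg_div, div_eq_div_iff hden1 hden2]
  have E1 : (((2*m+2).factorial : ℕ):ℂ) = (2*(m:ℂ)+2) * (((2*m+1).factorial:ℕ):ℂ) := by
    rw [Nat.factorial_succ]; push_cast; ring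
  have E4 : (((m+1).factorial : ℕ):ℂ) = ((m:ℂ)+1) * ((m.factorial:ℕ):ℂ) := by
    rw [Nat.factorial_succ]; push_cast; ring
  rw [E1, E4]
  ring

lemma hasDerivAt_term (x : ℝ) (z : ℂ) (m : ℕ) :
    HasDerivAt (fun x:ℝ => ((x:ℂ)*z)^m) ((m:ℂ) * ((x:ℂ)*z)^(m-1) * z) x := by
  have he : HasDerivAt (fun w:ℂ => (w*z)^m) ((m:ℂ) * ((x:ℂ)*z)^(m-1) * z) (x:ℂ) := by
    simpa using ((hasDerivAt_id ((x:ℂ))).mul_const z).fun_pow m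
  exact he.comp_ofReal

lemma deriv_Fz (z : ℂ) (n : ℕ) (x : ℝ) :
    deriv (Fz z n) x = ∑ k ∈ Finset.range (n/2+1),
      czCoeff z n k * (((n-2*k : ℕ):ℂ) * ((x:ℂ)*z)^(n-2*k-1) * z) := by
  have h : HasDerivAt (Fz z n) (∑ k ∈ Finset.range (n/2+1),
      czCoeff z n k * (((n-2*k : ℕ):ℂ) * ((x:ℂ)*z)^(n-2*k-1) * z)) x := by
    apply HasDerivAt.fun_sum
    intro k _
    exact (hasDerivAt_term x z (n-2*k)).const_mul _
  exact h.deriv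

lemma conj_mul_self (z : ℂ) : conj z * z = ((‖z‖:ℂ))^2 := by
  rw [mul_comm, Complex.mul_conj]
  rw [Complex.normSq_eq_norm_sq, Complex.ofReal_pow]

lemma iter_eq (z : ℂ) (n : ℕ) :
    (Tz z)^[n] (fun _ : ℝ => (1 : ℂ)) = Fz z n := by
  induction n with
  | zero =>
    funext x
    simp [Fz, czCoeff]
  | succ n ih =>
    rw [Function.iterate_succ_apply', ih]
    funext x
    show z * (x:ℂ) * Fz z n x - conj z * deriv (Fz z n) x = Fz z (n+1) x
    rw [deriv_Fz]
    simp only [Fz]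
    have hw := conj_mul_self z
    have step1 : z * (x:ℂ) * ∑ k ∈ Finset.range (n/2+1),
        czCoeff z n k * ((x:ℂ)*z)^(n-2*k)
        = ∑ k ∈ Finset.range (n/2+1), czCoeff z n k * ((x:ℂ)*z)^(n+1-2*k) := by
      rw [Finset.mul_sum]
      refine Finset.sum_congr rfl fun k hk => ?_
      have h2k : 2*k ≤ n := by have := Finset.mem_range.1 hk; omega
      have he : n + 1 - 2*k = (n - 2*k) + 1 := by omega
      rw [he, pow_succ]; ring
    have step2 : conj z * ∑ k ∈ Finset.range (n/2+1),
        czCoeff z n k * (((n-2*k : ℕ):ℂ) * ((x:ℂ)*z)^(n-2*k-1) * z)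
        = ∑ k ∈ Finset.range (n/2+1),
          czCoeff z n k * ((n-2*k : ℕ):ℂ) * ((‖z‖:ℂ)^2) * ((x:ℂ)*z)^(n-2*k-1) := by
      rw [Finset.mul_sum]
      refine Finset.sum_congr rfl fun k _ => ?_
      rw [show conj z * (czCoeff z n k * (((n-2*k : ℕ):ℂ) * ((x:ℂ)*z)^(n-2*k-1) * z))
          = czCoeff z n k * ((n-2*k : ℕ):ℂ) * (conj z * z) * ((x:ℂ)*z)^(n-2*k-1) from by
        ring, hw]
    rw [step1, step2]
    obtain ⟨m, hn | hn⟩ : ∃ m, n = 2*m ∨ n = 2*m+1 := ⟨n/2, by omega⟩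
    · subst hn
      have hr1 : 2*m/2 = m := by omega
      have hr2 : (2*m+1)/2 = m := by omega
      rw [hr1, hr2]
      rw [Finset.sum_range_succ' (fun k => czCoeff z (2*m) k * ((x:ℂ)*z)^(2*m+1-2*k)) m,
          Finset.sum_range_succ (fun k =>
            czCoeff z (2*m) k * ((2*m-2*k : ℕ):ℂ) * ((‖z‖:ℂ)^2) * ((x:ℂ)*z)^(2*m-2*k-1)) m,
          Finset.sum_range_succ' (fun k => czCoeff z (2*m+1) k * ((x:ℂ)*z)^(2*m+1-2*k)) m]
      have htm : czCoeff z (2*m) m * ((2*m-2*m : ℕ):ℂ) * ((‖z‖:ℂ)^2)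
          * ((x:ℂ)*z)^(2*m-2*m-1) = 0 := by simp
      have h0 : czCoeff z (2*m+1) 0 * ((x:ℂ)*z)^(2*m+1-2*0)
          = czCoeff z (2*m) 0 * ((x:ℂ)*z)^(2*m+1-2*0) := by
        rw [czCoeff_zero, czCoeff_zero]
      have hmain : ∑ k ∈ Finset.range m,
          czCoeff z (2*m+1) (k+1) * ((x:ℂ)*z)^(2*m+1-2*(k+1))
          = ∑ k ∈ Finset.range m, (czCoeff z (2*m) (k+1) * ((x:ℂ)*z)^(2*m+1-2*(k+1))
            - czCoeff z (2*m) k * ((2*m-2*k : ℕ):ℂ) * ((‖z‖:ℂ)^2)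
              * ((x:ℂ)*z)^(2*m-2*k-1)) := by
        refine Finset.sum_congr rfl fun k hk => ?_
        have hkm : k < m := Finset.mem_range.1 hk
        have hsucc := czCoeff_succ z (2*m) k (by omega)
        have hexp : 2*m-2*k-1 = 2*m+1-2*(k+1) := by omega
        rw [hexp, show (2*m : ℕ) + 1 = (2*m) + 1 from rfl, hsucc]
        ring
      rw [hmain, Finset.sum_sub_distrib, htm, h0]
      ring
    · subst hn
      have hr1 : (2*m+1)/2 = m := by omega
      have hr2 : (2*m+1+1)/2 = m+1 := by omega
      rw [hr1, hr2]
      rw [Finset.sum_range_succ (fun k => czCoeff z (2*m+1+1) k * ((x:ℂ)*z)^(2*m+1+1-2*k)) (m+1),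
          Finset.sum_range_succ' (fun k => czCoeff z (2*m+1+1) k * ((x:ℂ)*z)^(2*m+1+1-2*k)) m,
          Finset.sum_range_succ' (fun k => czCoeff z (2*m+1) k * ((x:ℂ)*z)^(2*m+1+1-2*k)) m,
          Finset.sum_range_succ (fun k =>
            czCoeff z (2*m+1) k * ((2*m+1-2*k : ℕ):ℂ) * ((‖z‖:ℂ)^2)
              * ((x:ℂ)*z)^(2*m+1-2*k-1)) m]
      have h0 : czCoeff z (2*m+1+1) 0 * ((x:ℂ)*z)^(2*m+1+1-2*0)
          = czCoeff z (2*m+1) 0 * ((x:ℂ)*z)^(2*m+1+1-2*0) := by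
        rw [czCoeff_zero, czCoeff_zero]
      have htop : czCoeff z (2*m+1+1) (m+1) * ((x:ℂ)*z)^(2*m+1+1-2*(m+1))
          = -(czCoeff z (2*m+1) m * ((2*m+1-2*m : ℕ):ℂ) * ((‖z‖:ℂ)^2)
              * ((x:ℂ)*z)^(2*m+1-2*m-1)) := by
        have e1 : 2*m+1+1-2*(m+1) = 0 := by omega
        have e2 : 2*m+1-2*m-1 = 0 := by omega
        have e3 : (2*m+1-2*m : ℕ) = 1 := by omega
        rw [e1, e2, e3, show (2*m+1+1) = 2*m+2 from rfl, czCoeff_top]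
        push_cast
        ring
      have hmain : ∑ k ∈ Finset.range m,
          czCoeff z (2*m+1+1) (k+1) * ((x:ℂ)*z)^(2*m+1+1-2*(k+1))
          = ∑ k ∈ Finset.range m, (czCoeff z (2*m+1) (k+1) * ((x:ℂ)*z)^(2*m+1+1-2*(k+1))
            - czCoeff z (2*m+1) k * ((2*m+1-2*k : ℕ):ℂ) * ((‖z‖:ℂ)^2)
              * ((x:ℂ)*z)^(2*m+1-2*k-1)) := by
        refine Finset.sum_congr rfl fun k hk => ?_
        have hkm : k < m := Finset.mem_range.1 hk
        have hsucc := czCoeff_succ z (2*m+1) k (by omega)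
        have hexp : 2*m+1-2*k-1 = 2*m+1+1-2*(k+1) := by omega
        rw [hexp, hsucc]
        ring
      rw [hmain, Finset.sum_sub_distrib, h0, htop]
      ring

theorem iterates_of_Tz_on_one (z : ℂ) (n : ℕ) (x : ℝ) :
    (1 / (n.factorial : ℂ)) * ((Tz z)^[n] (fun _ : ℝ => (1 : ℂ))) x =
      ∑ k ∈ Finset.range (n / 2 + 1),
        (-1) ^ k * (‖z‖ : ℂ) ^ (2 * k) * ((x : ℂ) * z) ^ (n - 2 * k) /
          ((2 : ℂ) ^ k * ((n - 2 * k).factorial : ℂ) * (k.factorial : ℂ)) := by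
  rw [iter_eq]
  simp only [Fz, Finset.mul_sum]
  refine Finset.sum_congr rfl fun k _ => ?_
  have hn : ((n.factorial : ℂ)) ≠ 0 := fact_cast_ne n
  have hd : ((2:ℂ)^k * (((n - 2*k).factorial : ℕ):ℂ) * ((k.factorial : ℕ):ℂ)) ≠ 0 := by
    exact mul_ne_zero (mul_ne_zero (pow_ne_zero _ two_ne_zero) (fact_cast_ne _)) (fact_cast_ne _)
  rw [czCoeff]
  field_simp
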